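/- The addition a ⊕ b := (a·bᵀ)²·a on the 6-element Brandt monoid B₂¹ makes (B₂¹, ⊕, ·) an additively idempotent semiring, and a ⊕ b is the greatest lower bound of {a, b} with respect to the natural partial order of B₂¹ as an inverse semigroup. -/

import Mathlib

/-- The six 2×2 zero-one matrices 0, E (identity), E₁₂, E₂₁, E₁₁, E₂₂. -/
def B21 : Set (Matrix (Fin 2) (Fin 2) ℕ) :=
  {0, 1, Matrix.single 0 1 1, Matrix.single 1 0 1,
   Matrix.single 0 0 1, Matrix.single 1 1 1}

namespace B21aux

abbrev M := Matrix (Fin 2) (Fin 2) ℕ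

def l : List M :=
  [0, 1, Matrix.single 0 1 1, Matrix.single 1 0 1,
   Matrix.single 0 0 1, Matrix.single 1 1 1]

lemma mem_iff (x : M) : x ∈ B21 ↔ x ∈ l := by
  simp [B21, l, Set.mem_insert_iff]

def op (a b : M) : M := (a * b.transpose) * (a * b.transpose) * a

def P (c a : M) : Prop := c = c * c.transpose * a

instance (c a : M) : Decidable (P c a) := by unfold P; infer_instance

lemma key : ∀ a ∈ l, ∀ b ∈ l, op a b ∈ l := by decide

lemma comm : ∀ a ∈ l, ∀ b ∈ l, op a b = op b a := by decide

lemma assoc : ∀ a ∈ l, ∀ b ∈ l, ∀ c ∈ l, op (op a b) c = op a (op b c) := by decide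

lemma idem : ∀ a ∈ l, op a a = a := by decide

lemma ldist : ∀ a ∈ l, ∀ b ∈ l, ∀ c ∈ l, c * op a b = op (c * a) (c * b) := by decide

lemma rdist : ∀ a ∈ l, ∀ b ∈ l, ∀ c ∈ l, op a b * c = op (a * c) (b * c) := by decide

lemma fwd : ∀ c ∈ l, ∀ a ∈ l, ∀ e ∈ l, e * e = e → c = e * a → P c a := by decide

lemma wit : ∀ c ∈ l, c * c.transpose ∈ l ∧ (c * c.transpose) * (c * c.transpose) = c * c.transpose := by
  decide

lemma glb1 : ∀ a ∈ l, ∀ b ∈ l, P (op a b) a := by decide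
lemma glb2 : ∀ a ∈ l, ∀ b ∈ l, P (op a b) b := by decide
lemma glb3 : ∀ a ∈ l, ∀ b ∈ l, ∀ c ∈ l, P c a → P c b → P c (op a b) := by decide

end B21aux

/-- With a ⊕ b := (a·bᵀ)²·a, (B₂¹, ⊕, ·) is an additively idempotent
semiring, and a ⊕ b is the greatest lower bound of {a, b} in the natural
partial order of B₂¹ as an inverse semigroup. -/
theorem stmt_17
    (oplus : Matrix (Fin 2) (Fin 2) ℕ → Matrix (Fin 2) (Fin 2) ℕ →
      Matrix (Fin 2) (Fin 2) ℕ)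
    (hop : ∀ a b, oplus a b = (a * b.transpose) * (a * b.transpose) * a)
    (le : Matrix (Fin 2) (Fin 2) ℕ → Matrix (Fin 2) (Fin 2) ℕ → Prop)
    (hle : ∀ a b, le a b ↔ ∃ e ∈ B21, e * e = e ∧ a = e * b) :
    -- additively idempotent semiring structure on B₂¹
    ((∀ a ∈ B21, ∀ b ∈ B21, oplus a b ∈ B21) ∧
     (∀ a ∈ B21, ∀ b ∈ B21, oplus a b = oplus b a) ∧
     (∀ a ∈ B21, ∀ b ∈ B21, ∀ c ∈ B21, oplus (oplus a b) c = oplus a (oplus b c)) ∧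
     (∀ a ∈ B21, oplus a a = a) ∧
     (∀ a ∈ B21, ∀ b ∈ B21, ∀ c ∈ B21, c * oplus a b = oplus (c * a) (c * b)) ∧
     (∀ a ∈ B21, ∀ b ∈ B21, ∀ c ∈ B21, oplus a b * c = oplus (a * c) (b * c))) ∧
    -- a ⊕ b is the greatest lower bound of {a, b}
    (∀ a ∈ B21, ∀ b ∈ B21,
      le (oplus a b) a ∧ le (oplus a b) b ∧
      ∀ c ∈ B21, le c a → le c b → le c (oplus a b)) := by
  have hop' : ∀ a b, oplus a b = B21aux.op a b := fun a b => hop a b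
  -- characterization of le on B21
  have le_iff : ∀ c ∈ B21aux.l, ∀ a ∈ B21aux.l, (le c a ↔ B21aux.P c a) := by
    intro c hc a ha
    constructor
    · rintro h
      obtain ⟨e, he, hee, hca⟩ := (hle c a).mp h
      exact B21aux.fwd c hc a ha e ((B21aux.mem_iff e).mp he) hee hca
    · intro hP
      refine (hle c a).mpr ⟨c * c.transpose, (B21aux.mem_iff _).mpr (B21aux.wit c hc).1,
        (B21aux.wit c hc).2, hP⟩
  constructor
  · refine ⟨?_, ?_, ?_, ?_, ?_, ?_⟩
    · intro a ha b hb
      rw [hop', B21aux.mem_iff]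
      exact B21aux.key a ((B21aux.mem_iff a).mp ha) b ((B21aux.mem_iff b).mp hb)
    · intro a ha b hb
      rw [hop', hop']
      exact B21aux.comm a ((B21aux.mem_iff a).mp ha) b ((B21aux.mem_iff b).mp hb)
    · intro a ha b hb c hc
      rw [hop', hop', hop', hop']
      exact B21aux.assoc a ((B21aux.mem_iff a).mp ha) b ((B21aux.mem_iff b).mp hb)
        c ((B21aux.mem_iff c).mp hc)
    · intro a ha
      rw [hop']
      exact B21aux.idem a ((B21aux.mem_iff a).mp ha)
    · intro a ha b hb c hc
      rw [hop', hop']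
      exact B21aux.ldist a ((B21aux.mem_iff a).mp ha) b ((B21aux.mem_iff b).mp hb)
        c ((B21aux.mem_iff c).mp hc)
    · intro a ha b hb c hc
      rw [hop', hop']
      exact B21aux.rdist a ((B21aux.mem_iff a).mp ha) b ((B21aux.mem_iff b).mp hb)
        c ((B21aux.mem_iff c).mp hc)
  · intro a ha b hb
    have ha' := (B21aux.mem_iff a).mp ha
    have hb' := (B21aux.mem_iff b).mp hb
    have hab : B21aux.op a b ∈ B21aux.l := B21aux.key a ha' b hb'
    have habo : oplus a b ∈ B21aux.l := by rw [hop']; exact hab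
    refine ⟨(le_iff _ habo _ ha').mpr ?_, (le_iff _ habo _ hb').mpr ?_, ?_⟩
    · rw [hop']; exact B21aux.glb1 a ha' b hb'
    · rw [hop']; exact B21aux.glb2 a ha' b hb'
    · intro c hc h1 h2
      have hc' := (B21aux.mem_iff c).mp hc
      refine (le_iff _ hc' _ habo).mpr ?_
      rw [hop']
      exact B21aux.glb3 a ha' b hb' c hc'
        ((le_iff _ hc' _ ha').mp h1) ((le_iff _ hc' _ hb').mp h2)
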